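/- For every r ∈ (0,1), the remainder S_0(r) = J_0(r) − 1 satisfies − r²/4 ≤ S_0(r) ≤ − (r² cos r)/4 ≤ 0. -/

import Mathlib

open Real Set

/-- Bessel function of the first kind of integer order, via the Poisson integral
representation. -/
noncomputable def besselJ (n : ℕ) (r : ℝ) : ℝ :=
  r ^ n / (2 ^ n * Real.Gamma ((n : ℝ) + 1 / 2) * Real.sqrt Real.pi) *
    ∫ t in (-1 : ℝ)..1, Real.cos (r * t) * (1 - t ^ 2) ^ ((n : ℝ) - 1 / 2)

/-- The remainder `S_n(r) = J_n(r) − r^n/(2^n n!)`. -/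
noncomputable def besselS (n : ℕ) (r : ℝ) : ℝ :=
  besselJ n r - r ^ n / (2 ^ n * Nat.factorial n)

open MeasureTheory intervalIntegral

noncomputable def bg (t : ℝ) : ℝ := (1 - t ^ 2) ^ (-(1/2) : ℝ)

lemma bg_nonneg {t : ℝ} (ht : t ∈ Icc (-1:ℝ) 1) : 0 ≤ bg t :=
  Real.rpow_nonneg (by nlinarith [ht.1, ht.2]) _

lemma bg_eq {t : ℝ} (ht : t ∈ Ioo (-1:ℝ) 1) : bg t = 1 / Real.sqrt (1 - t ^ 2) := by
  have h : (0:ℝ) < 1 - t ^ 2 := by nlinarith [ht.1, ht.2]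
  rw [bg, Real.rpow_neg h.le, ← Real.sqrt_eq_rpow, one_div]

lemma bg_meas : Measurable bg := by
  unfold bg; measurability

lemma bb_int : IntervalIntegrable
    (fun t : ℝ => (1 - t) ^ (-(1/2) : ℝ) + (1 + t) ^ (-(1/2) : ℝ)) volume (-1) 1 := by
  have h1 : IntervalIntegrable (fun x : ℝ => x ^ (-(1/2) : ℝ)) volume 2 0 :=
    intervalIntegrable_rpow' (by norm_num)
  have h2 : IntervalIntegrable (fun x : ℝ => x ^ (-(1/2) : ℝ)) volume 0 2 :=
    intervalIntegrable_rpow' (by norm_num)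
  have ha := h1.comp_sub_left 1
  have hb := h2.comp_add_right 1
  norm_num at ha hb
  simp only [add_comm (1:ℝ)]
  exact ha.add hb

lemma bg_le_bb {t : ℝ} (ht : t ∈ Ioc (-1:ℝ) 1) :
    bg t ≤ (1 - t) ^ (-(1/2) : ℝ) + (1 + t) ^ (-(1/2) : ℝ) := by
  have h1 : (0:ℝ) ≤ 1 - t := by linarith [ht.2]
  have h2 : (0:ℝ) ≤ 1 + t := by linarith [ht.1]
  have hsplit : bg t = (1 - t) ^ (-(1/2) : ℝ) * (1 + t) ^ (-(1/2) : ℝ) := by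
    rw [bg, show (1:ℝ) - t ^ 2 = (1 - t) * (1 + t) by ring, Real.mul_rpow h1 h2]
  rw [hsplit]
  rcases le_total 0 t with h | h
  · have : (1 + t) ^ (-(1/2) : ℝ) ≤ 1 :=
      Real.rpow_le_one_of_one_le_of_nonpos (by linarith) (by norm_num)
    nlinarith [Real.rpow_nonneg h1 (-(1/2) : ℝ), Real.rpow_nonneg h2 (-(1/2) : ℝ)]
  · have : (1 - t) ^ (-(1/2) : ℝ) ≤ 1 :=
      Real.rpow_le_one_of_one_le_of_nonpos (by linarith) (by norm_num)
    nlinarith [Real.rpow_nonneg h1 (-(1/2) : ℝ), Real.rpow_nonneg h2 (-(1/2) : ℝ)]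

lemma bg_int : IntervalIntegrable bg volume (-1) 1 := by
  refine bb_int.mono_fun' bg_meas.aestronglyMeasurable ?_
  rw [uIoc_of_le (by norm_num : (-1:ℝ) ≤ 1)]
  filter_upwards [ae_restrict_mem measurableSet_Ioc] with t ht
  rw [Real.norm_eq_abs, abs_of_nonneg (bg_nonneg (Ioc_subset_Icc_self ht))]
  exact bg_le_bb ht

lemma bg_integral : ∫ t in (-1:ℝ)..1, bg t = π := by
  have := integral_eq_sub_of_hasDeriv_right_of_le (by norm_num : (-1:ℝ) ≤ 1)
    (Real.continuous_arcsin.continuousOn) (f' := bg) ?_ bg_int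
  · rw [this, Real.arcsin_one, Real.arcsin_neg_one]; ring
  · intro x hx
    have h := (Real.hasDerivAt_arcsin hx.1.ne' hx.2.ne).hasDerivWithinAt (s := Ioi x)
    rwa [show (1 / Real.sqrt (1 - x ^ 2)) = bg x from (bg_eq hx).symm] at h

lemma t2bg_eqOn : EqOn (fun t : ℝ => t ^ 2 * bg t)
    (fun t : ℝ => bg t - Real.sqrt (1 - t ^ 2)) (Icc (-1:ℝ) 1) := by
  intro t ht
  rcases eq_or_lt_of_le (show (0:ℝ) ≤ 1 - t ^ 2 by nlinarith [ht.1, ht.2]) with h | h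
  · have hb : bg t = 0 := by rw [bg, ← h, Real.zero_rpow (by norm_num)]
    simp only [hb, ← h, Real.sqrt_zero, mul_zero, sub_zero]
  · have hs : Real.sqrt (1 - t ^ 2) ≠ 0 := (Real.sqrt_pos.mpr h).ne'
    have hsq : Real.sqrt (1 - t ^ 2) * Real.sqrt (1 - t ^ 2) = 1 - t ^ 2 :=
      Real.mul_self_sqrt h.le
    simp only []
    rw [bg_eq ⟨by nlinarith [ht.1], by nlinarith [ht.2]⟩]
    field_simp
    try nlinarith [hsq]

lemma t2bg_int : IntervalIntegrable (fun t : ℝ => t ^ 2 * bg t) volume (-1) 1 := by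
  refine bg_int.mono_fun' ((measurable_id.pow_const 2).mul bg_meas).aestronglyMeasurable ?_
  rw [uIoc_of_le (by norm_num : (-1:ℝ) ≤ 1)]
  filter_upwards [ae_restrict_mem measurableSet_Ioc] with t ht
  have h0 := bg_nonneg (Ioc_subset_Icc_self ht)
  rw [Real.norm_eq_abs, abs_of_nonneg (by positivity)]
  nlinarith [mul_nonneg h0 (show (0:ℝ) ≤ 1 - t ^ 2 by nlinarith [ht.1, ht.2])]

lemma sqrt_int : IntervalIntegrable (fun t : ℝ => Real.sqrt (1 - t ^ 2)) volume (-1) 1 :=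
  (Real.continuous_sqrt.comp (by continuity)).intervalIntegrable _ _

lemma t2bg_integral : ∫ t in (-1:ℝ)..1, t ^ 2 * bg t = π / 2 := by
  rw [integral_congr (g := fun t : ℝ => bg t - Real.sqrt (1 - t ^ 2))
      (by rw [uIcc_of_le (by norm_num : (-1:ℝ) ≤ 1)]; exact t2bg_eqOn),
    integral_sub bg_int sqrt_int, bg_integral, integral_sqrt_one_sub_sq]
  ring

lemma cos_upper_aux {r x : ℝ} (hr0 : 0 < r) (hr1 : r < 1) (hx : |x| ≤ r) :
    Real.cos x - 1 ≤ -(x ^ 2 * Real.cos r) / 2 := by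
  have hx1 : |x| ≤ 1 := hx.trans hr1.le
  have h1 := abs_le.mp (Real.cos_bound hx1)
  have h2 := abs_le.mp (Real.cos_bound (x := r) (by rw [abs_of_pos hr0]; exact hr1.le))
  have hax : |x| ^ 4 = x ^ 4 := by rw [← abs_pow, abs_of_nonneg (by positivity)]
  have har : |r| ^ 4 = r ^ 4 := by rw [← abs_pow, abs_of_nonneg (by positivity)]
  rw [hax] at h1; rw [har] at h2
  have hx2 : x ^ 2 ≤ r ^ 2 := by nlinarith [abs_le.mp hx, abs_nonneg x]
  have hx4 : x ^ 4 ≤ x ^ 2 * r ^ 2 := by nlinarith [sq_nonneg x]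
  have hr2 : r ^ 2 ≤ 1 := by nlinarith
  have hr4 : r ^ 4 ≤ r ^ 2 := by nlinarith [sq_nonneg r, hr2]
  have hcr : Real.cos r - 1 ≤ -r ^ 2 / 2 + 5 * r ^ 4 / 96 := by linarith [h2.2]
  nlinarith [mul_le_mul_of_nonneg_left hcr (by positivity : (0:ℝ) ≤ x ^ 2 / 2),
    mul_le_mul_of_nonneg_left hr4 (by positivity : (0:ℝ) ≤ x ^ 2), h1.2, hx4, sq_nonneg x]

theorem bessel_remainder_zero_bound (r : ℝ) (hr : r ∈ Set.Ioo (0 : ℝ) 1) :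
    -(r ^ 2) / 4 ≤ besselS 0 r ∧
      besselS 0 r ≤ -(r ^ 2 * Real.cos r) / 4 ∧
      -(r ^ 2 * Real.cos r) / 4 ≤ 0 := by
  obtain ⟨hr0, hr1⟩ := hr
  have hπ : (0:ℝ) < π := Real.pi_pos
  -- cos r ≥ 0
  have hcos : 0 ≤ Real.cos r := Real.cos_nonneg_of_mem_Icc
    ⟨by linarith [Real.pi_gt_three], by linarith [Real.pi_gt_three]⟩
  -- integrability of cos(rt) * bg t
  have hcg_int : IntervalIntegrable (fun t : ℝ => Real.cos (r * t) * bg t) volume (-1) 1 := by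
    refine bg_int.mono_fun' ((Real.continuous_cos.comp (continuous_const.mul
      continuous_id)).measurable.mul bg_meas).aestronglyMeasurable ?_
    rw [uIoc_of_le (by norm_num : (-1:ℝ) ≤ 1)]
    filter_upwards [ae_restrict_mem measurableSet_Ioc] with t ht
    have h0 := bg_nonneg (Ioc_subset_Icc_self ht)
    rw [Real.norm_eq_abs, abs_mul, abs_of_nonneg h0]
    nlinarith [Real.abs_cos_le_one (r * t)]
  have hf2_int : IntervalIntegrable (fun t : ℝ => (Real.cos (r * t) - 1) * bg t)
      volume (-1) 1 := by
    have : (fun t : ℝ => (Real.cos (r * t) - 1) * bg t)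
        = fun t => Real.cos (r * t) * bg t - bg t := by funext t; ring
    rw [this]; exact hcg_int.sub bg_int
  -- besselJ 0 r in terms of bg
  have hJ : besselJ 0 r = (∫ t in (-1:ℝ)..1, Real.cos (r * t) * bg t) / π := by
    rw [besselJ]
    have hΓ : Real.Gamma ((0:ℕ) + 1/2 : ℝ) = Real.sqrt π := by
      norm_num [Real.Gamma_one_half_eq]
    rw [hΓ]
    have hss : Real.sqrt π * Real.sqrt π = π := Real.mul_self_sqrt hπ.le
    have hint : (∫ t in (-1:ℝ)..1, Real.cos (r * t) * (1 - t ^ 2) ^ (((0:ℕ):ℝ) - 1/2))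
        = ∫ t in (-1:ℝ)..1, Real.cos (r * t) * bg t := by
      norm_num [bg]
    rw [hint]
    field_simp
    rw [sq, hss]; ring
  have hS : besselS 0 r = (∫ t in (-1:ℝ)..1, (Real.cos (r * t) - 1) * bg t) / π := by
    rw [besselS, hJ]
    have : (∫ t in (-1:ℝ)..1, (Real.cos (r * t) - 1) * bg t)
        = (∫ t in (-1:ℝ)..1, Real.cos (r * t) * bg t) - π := by
      have : (fun t : ℝ => (Real.cos (r * t) - 1) * bg t)
          = fun t => Real.cos (r * t) * bg t - bg t := by funext t; ring
      rw [this, integral_sub hcg_int bg_int, bg_integral]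
    rw [this]
    field_simp
    simp [Nat.factorial_zero]
  -- lower bound on the integral
  have hlow : -(r ^ 2) / 2 * (π / 2) ≤ ∫ t in (-1:ℝ)..1, (Real.cos (r * t) - 1) * bg t := by
    have := integral_mono_on (by norm_num : (-1:ℝ) ≤ 1)
      (t2bg_int.const_mul (-(r ^ 2) / 2)) hf2_int (fun t ht => ?_)
    · rwa [intervalIntegral.integral_const_mul, t2bg_integral] at this
    · have h0 := bg_nonneg ht
      have hc : 1 - (r * t) ^ 2 / 2 ≤ Real.cos (r * t) := Real.one_sub_sq_div_two_le_cos
      nlinarith [mul_le_mul_of_nonneg_right hc h0]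
  -- upper bound on the integral
  have hhigh : (∫ t in (-1:ℝ)..1, (Real.cos (r * t) - 1) * bg t)
      ≤ -(r ^ 2 * Real.cos r) / 2 * (π / 2) := by
    have := integral_mono_on (by norm_num : (-1:ℝ) ≤ 1) hf2_int
      (t2bg_int.const_mul (-(r ^ 2 * Real.cos r) / 2)) (fun t ht => ?_)
    · rwa [intervalIntegral.integral_const_mul, t2bg_integral] at this
    · have h0 := bg_nonneg ht
      have habs : |r * t| ≤ r := by
        rw [abs_mul, abs_of_pos hr0]
        nlinarith [abs_le.mpr ⟨ht.1, ht.2⟩, abs_nonneg t, abs_le.mp (le_refl |t|)]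
      have hc := cos_upper_aux hr0 hr1 habs
      have := mul_le_mul_of_nonneg_right hc h0
      calc (Real.cos (r * t) - 1) * bg t ≤ (-((r * t) ^ 2 * Real.cos r) / 2) * bg t := this
        _ = -(r ^ 2 * Real.cos r) / 2 * (t ^ 2 * bg t) := by ring
  refine ⟨?_, ?_, ?_⟩
  · rw [hS, le_div_iff₀ hπ]
    nlinarith [hlow]
  · rw [hS, div_le_iff₀ hπ]
    nlinarith [hhigh]
  · have : 0 ≤ r ^ 2 * Real.cos r := by positivity
    linarith
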